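/- Under the assumptions of the previous statement, the kinetic-theory temperature θ[f] and the thermodynamic temperature T(ρ, s) = ρ^{2/n}(2πe)^{−1} exp(−(2/n) s/ρ) (with s = ∫ f log f dp) satisfy θ[f] = T(ρ, s) · exp( (2/n) r[f|f_m]/ρ ). In particular θ[f] ≥ T(ρ, s), with equality if and only if f = f_m almost everywhere. -/

import Mathlib

open Real MeasureTheory

lemma gibbs_nonneg {x y : ℝ} (hx : 0 < x) (hy : 0 < y) :
    0 ≤ x * Real.log (x / y) + y - x := by
  have h1 : Real.log (y / x) ≤ y / x - 1 := Real.log_le_sub_one_of_pos (div_pos hy hx)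
  have h2 : x * Real.log (y / x) ≤ y - x := by
    have := mul_le_mul_of_nonneg_left h1 hx.le
    calc x * Real.log (y / x) ≤ x * (y / x - 1) := this
      _ = y - x := by field_simp
  have h3 : Real.log (x / y) = - Real.log (y / x) := by
    rw [← Real.log_inv]; congr 1; field_simp
  nlinarith [h2]

lemma gibbs_pos {x y : ℝ} (hx : 0 < x) (hy : 0 < y) (hxy : x ≠ y) :
    0 < x * Real.log (x / y) + y - x := by
  have hne : y / x ≠ 1 := by
    intro h
    exact hxy ((div_eq_one_iff_eq hx.ne').mp h).symm
  have h1 : Real.log (y / x) < y / x - 1 := Real.log_lt_sub_one_of_pos (div_pos hy hx) hne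
  have h2 : x * Real.log (y / x) < y - x := by
    have := mul_lt_mul_of_pos_left h1 hx
    calc x * Real.log (y / x) < x * (y / x - 1) := this
      _ = y - x := by field_simp
  have h3 : Real.log (x / y) = - Real.log (y / x) := by
    rw [← Real.log_inv]; congr 1; field_simp
  nlinarith [h2]

theorem stmt_14 (n : ℕ) (hn : 1 ≤ n)
    (f : EuclideanSpace ℝ (Fin n) → ℝ) (hfpos : ∀ p, 0 < f p)
    (hf : Integrable f) (hf2 : Integrable (fun p => ‖p‖ ^ 2 * f p))
    (hfent : Integrable (fun p => f p * Real.log (f p)))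
    (ρ θ : ℝ) (u : EuclideanSpace ℝ (Fin n))
    (hρ : ρ = ∫ p, f p) (hρpos : 0 < ρ)
    (hu : ρ • u = ∫ p, f p • p)
    (hθ : θ = (1 / (n * ρ)) * ∫ p, ‖p - u‖ ^ 2 * f p) (hθpos : 0 < θ)
    (fm : EuclideanSpace ℝ (Fin n) → ℝ)
    (hfm : fm = fun p => ρ * (2 * π * θ) ^ (-(n : ℝ) / 2) *
      Real.exp (-‖p - u‖ ^ 2 / (2 * θ)))
    (s r T : ℝ)
    (hs : s = ∫ p, f p * Real.log (f p))
    (hr : r = ∫ p, (f p * Real.log (f p / fm p) + fm p - f p))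
    (hT : T = ρ ^ ((2 : ℝ) / n) * (2 * π * Real.exp 1)⁻¹ * Real.exp (-(2 / n) * (s / ρ))) :
    θ = T * Real.exp ((2 / n) * (r / ρ)) ∧
    T ≤ θ ∧
    (θ = T ↔ f =ᵐ[volume] fm) := by
  have hnpos : (0 : ℝ) < n := by exact_mod_cast hn
  have hnne : (n : ℝ) ≠ 0 := hnpos.ne'
  have h2πθ : (0 : ℝ) < 2 * π * θ := by positivity
  set c : ℝ := ρ * (2 * π * θ) ^ (-(n : ℝ) / 2) with hcdef
  have hcpos : 0 < c := by positivity
  have hfmpos : ∀ p, 0 < fm p := fun p => by rw [hfm]; positivity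
  -- Gaussian integral facts
  set g : EuclideanSpace ℝ (Fin n) → ℝ := fun q => Real.exp (-(1 / (2 * θ)) * ‖q‖ ^ 2)
    with hgdef
  have hb : (0 : ℝ) < 1 / (2 * θ) := by positivity
  have hgval : ∫ q : EuclideanSpace ℝ (Fin n), g q = (2 * π * θ) ^ ((n : ℝ) / 2) := by
    rw [hgdef]
    rw [GaussianFourier.integral_rexp_neg_mul_sq_norm hb]
    rw [finrank_euclideanSpace_fin]
    congr 1
    field_simp
  have hgint : Integrable g := by
    by_contra h
    have hv := hgval
    rw [integral_undef h] at hv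
    have : (0 : ℝ) < (2 * π * θ) ^ ((n : ℝ) / 2) := by positivity
    rw [← hv] at this
    exact lt_irrefl 0 this
  have hfm' : fm = fun p => c * g (p - u) := by
    rw [hfm]; funext p
    rw [hgdef]
    simp only []
    congr 1
    ring
  have hfmint : Integrable fm := by
    rw [hfm']
    exact (hgint.comp_sub_right u).const_mul c
  have hfmval : ∫ p, fm p = ρ := by
    rw [hfm']
    rw [integral_const_mul]
    rw [integral_sub_right_eq_self g u]
    rw [hgval, hcdef]
    rw [mul_assoc, ← Real.rpow_add h2πθ,
      show -(n : ℝ) / 2 + (n : ℝ) / 2 = 0 by ring, Real.rpow_zero, mul_one]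
  -- second moment around u
  have hI2 : Integrable (fun p => ‖p - u‖ ^ 2 * f p) := by
    have hmeas : AEStronglyMeasurable (fun p : EuclideanSpace ℝ (Fin n) => ‖p - u‖ ^ 2 * f p)
        volume :=
      (((continuous_id.sub continuous_const).norm.pow 2).aestronglyMeasurable).mul
        hf.aestronglyMeasurable
    refine Integrable.mono' ((hf2.const_mul 2).add (hf.const_mul (2 * ‖u‖ ^ 2))) hmeas ?_
    filter_upwards with p
    simp only [Pi.add_apply]
    have h1 : ‖p - u‖ ≤ ‖p‖ + ‖u‖ := norm_sub_le p u
    have h2 : (0 : ℝ) ≤ ‖p - u‖ := norm_nonneg _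
    have h3 : (0 : ℝ) ≤ f p := (hfpos p).le
    have h4 : ‖p - u‖ ^ 2 ≤ 2 * ‖p‖ ^ 2 + 2 * ‖u‖ ^ 2 := by
      nlinarith [sq_nonneg (‖p‖ - ‖u‖), norm_nonneg p, norm_nonneg u]
    rw [Real.norm_eq_abs, abs_of_nonneg (by positivity)]
    nlinarith
  have hI2val : ∫ p, ‖p - u‖ ^ 2 * f p = n * ρ * θ := by
    rw [hθ]
    field_simp
  -- log of maxwellian
  have hlogfm : ∀ p, Real.log (fm p) = Real.log c - 1 / (2 * θ) * ‖p - u‖ ^ 2 := by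
    intro p
    rw [hfm']
    simp only []
    rw [Real.log_mul hcpos.ne' (Real.exp_pos _).ne', Real.log_exp]
    ring
  have heq : (fun p => f p * Real.log (fm p)) =
      fun p => Real.log c * f p - 1 / (2 * θ) * (‖p - u‖ ^ 2 * f p) := by
    funext p; rw [hlogfm p]; ring
  have hflogfm_int : Integrable (fun p => f p * Real.log (fm p)) := by
    rw [heq]
    exact (hf.const_mul _).sub (hI2.const_mul _)
  have hflogfm_val : ∫ p, f p * Real.log (fm p) = ρ * Real.log c - n * ρ / 2 := by
    rw [heq, integral_sub
      (show Integrable (fun p : EuclideanSpace ℝ (Fin n) => Real.log c * f p) volume from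
        hf.const_mul _)
      (show Integrable (fun p : EuclideanSpace ℝ (Fin n) =>
        1 / (2 * θ) * (‖p - u‖ ^ 2 * f p)) volume from hI2.const_mul _),
      integral_const_mul, integral_const_mul, ← hρ, hI2val]
    field_simp
  -- the relative entropy integrand
  have hGeq : (fun p => f p * Real.log (f p / fm p) + fm p - f p) =
      fun p => (f p * Real.log (f p) - f p * Real.log (fm p)) + fm p - f p := by
    funext p
    rw [Real.log_div (hfpos p).ne' (hfmpos p).ne']
    ring
  have hGint : Integrable (fun p => f p * Real.log (f p / fm p) + fm p - f p) := by
    rw [hGeq]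
    exact ((hfent.sub hflogfm_int).add hfmint).sub hf
  have hrval : r = s - ρ * Real.log c + n * ρ / 2 := by
    have hint1 : Integrable (fun p : EuclideanSpace ℝ (Fin n) =>
        f p * Real.log (f p) - f p * Real.log (fm p)) volume := hfent.sub hflogfm_int
    have hint2 : Integrable (fun p : EuclideanSpace ℝ (Fin n) =>
        f p * Real.log (f p) - f p * Real.log (fm p) + fm p) volume := hint1.add hfmint
    rw [hr, hGeq, integral_sub hint2 hf, integral_add hint1 hfmint,
      integral_sub hfent hflogfm_int, ← hs, hflogfm_val, hfmval, ← hρ]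
    ring
  have hlogc : Real.log c = Real.log ρ + (-(n : ℝ) / 2) * Real.log (2 * π * θ) := by
    rw [hcdef, Real.log_mul hρpos.ne' (by positivity), Real.log_rpow h2πθ]
  have hlog2πθ : Real.log (2 * π * θ) = Real.log (2 * π) + Real.log θ :=
    Real.log_mul (by positivity) hθpos.ne'
  -- part 1
  have hlogθeq : 2 / (n : ℝ) * Real.log ρ + -(Real.log (2 * π) + 1) + -(2 / n) * (s / ρ)
      + 2 / n * (r / ρ) = Real.log θ := by
    rw [hrval, hlogc, hlog2πθ]
    field_simp
    ring
  have goal1 : θ = T * Real.exp (2 / n * (r / ρ)) := by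
    rw [hT,
      show ρ ^ ((2 : ℝ) / n) = Real.exp (2 / (n : ℝ) * Real.log ρ) by
        rw [Real.rpow_def_of_pos hρpos, mul_comm],
      show (2 * π * Real.exp 1)⁻¹ = Real.exp (-(Real.log (2 * π) + 1)) by
        rw [Real.exp_neg, Real.exp_add, Real.exp_log (by positivity)],
      ← Real.exp_add, ← Real.exp_add, ← Real.exp_add, hlogθeq, Real.exp_log hθpos]
  have hrnonneg : 0 ≤ r := by
    rw [hr]
    exact integral_nonneg fun p => gibbs_nonneg (hfpos p) (hfmpos p)
  have hT0 : 0 < T := by rw [hT]; positivity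
  have hxnn : 0 ≤ 2 / (n : ℝ) * (r / ρ) :=
    mul_nonneg (by positivity) (div_nonneg hrnonneg hρpos.le)
  refine ⟨goal1, ?_, ?_⟩
  · rw [goal1]
    exact le_mul_of_one_le_right hT0.le (Real.one_le_exp hxnn)
  · constructor
    · intro hθT
      have hx : Real.exp (2 / (n : ℝ) * (r / ρ)) = 1 := by
        have h' : T * 1 = T * Real.exp (2 / (n : ℝ) * (r / ρ)) := by
          rw [mul_one]; exact hθT.symm.trans goal1
        exact (mul_left_cancel₀ hT0.ne' h').symm
      have hx0 : 2 / (n : ℝ) * (r / ρ) = 0 := by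
        have := congrArg Real.log hx
        rwa [Real.log_exp, Real.log_one] at this
      have hr0 : r = 0 := by
        rcases mul_eq_zero.mp hx0 with h | h
        · exact absurd h (by positivity)
        · rcases div_eq_zero_iff.mp h with h' | h'
          · exact h'
          · exact absurd h' hρpos.ne'
      have hG0 : (fun p => f p * Real.log (f p / fm p) + fm p - f p) =ᵐ[volume] 0 := by
        have hint0 : ∫ p, (f p * Real.log (f p / fm p) + fm p - f p) = 0 := by
          rw [← hr]; exact hr0
        exact (integral_eq_zero_iff_of_nonneg
          (fun p => gibbs_nonneg (hfpos p) (hfmpos p)) hGint).mp hint0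
      filter_upwards [hG0] with p hp
      by_contra hne
      exact (gibbs_pos (hfpos p) (hfmpos p) hne).ne' hp
    · intro hae
      have hG0 : (fun p => f p * Real.log (f p / fm p) + fm p - f p) =ᵐ[volume] 0 := by
        filter_upwards [hae] with p hp
        simp [hp, div_self (hfmpos p).ne']
      have hr0 : r = 0 := by
        rw [hr, integral_congr_ae hG0]
        simp
      rw [goal1, hr0]
      simp
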